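/- Let b > 2 be even, let p be the smallest odd prime dividing b−1, and let m be a positive integer such that b^m ≡ b (mod q) for every prime q ≤ b. Then for all 0 ≤ j ≤ p−2, the number b^m + 2j + 1 is b-anti-Niven; hence {b^m + 2j + 1 : 0 ≤ j ≤ p−2} is a b-anti-Niven 2-AP of length p−1. -/

import Mathlib

/-- Base-`b` digit sum of `n`. -/
def sdig (b n : ℕ) : ℕ := (Nat.digits b n).sum

/-- A positive integer `n` is `b`-anti-Niven if it is coprime to its base-`b` digit sum. -/
def AntiNiven (b n : ℕ) : Prop := 0 < n ∧ Nat.gcd n (sdig b n) = 1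

lemma sdig_split {b : ℕ} (hb : 1 < b) (c : ℕ) :
    sdig b c = c % b + sdig b (c / b) := by
  rcases Nat.eq_zero_or_pos c with h | h
  · simp [h, sdig]
  · unfold sdig
    rw [Nat.digits_def' hb h]
    simp

lemma sdig_pow_add {b : ℕ} (hb : 1 < b) :
    ∀ m, 0 < m → ∀ c, c < b ^ m → sdig b (b ^ m + c) = 1 + sdig b c := by
  intro m
  induction m with
  | zero => intro h; omega
  | succ m ih =>
    intro _ c hc
    rcases Nat.eq_zero_or_pos m with hm | hm
    · subst hm
      simp only [zero_add, pow_one] at hc ⊢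
      rw [sdig_split hb (b + c)]
      have h1 : (b + c) % b = c := by
        rw [Nat.add_comm, Nat.add_mod_right, Nat.mod_eq_of_lt hc]
      have h2 : (b + c) / b = 1 := by
        rw [Nat.add_comm, Nat.add_div_right _ (by omega), Nat.div_eq_of_lt hc]
      rw [h1, h2, sdig_split hb 1, Nat.mod_eq_of_lt hb, Nat.div_eq_of_lt hb,
        sdig_split hb c, Nat.mod_eq_of_lt hc, Nat.div_eq_of_lt hc]
      simp [sdig]
      omega
    · have e1 : (b ^ (m + 1) + c) % b = c % b := by
        rw [pow_succ, Nat.add_mod, Nat.mul_mod_left, Nat.zero_add,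
          Nat.mod_mod_of_dvd c (dvd_refl b)]
      have e2 : (b ^ (m + 1) + c) / b = b ^ m + c / b := by
        rw [pow_succ, mul_comm, Nat.mul_add_div (by omega)]
      have hclt : c / b < b ^ m := by
        rw [Nat.div_lt_iff_lt_mul (by omega)]
        rw [pow_succ] at hc; exact hc
      rw [sdig_split hb, e1, e2, ih hm (c / b) hclt, sdig_split hb c]
      omega

theorem stmt_8 (b p m : ℕ) (hb : 2 < b) (heven : Even b)
    (hp : p.Prime) (hodd : Odd p) (hpb : p ∣ b - 1)
    (hmin : ∀ q : ℕ, q.Prime → Odd q → q ∣ b - 1 → p ≤ q)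
    (hm : 0 < m) (hmod : ∀ q : ℕ, q.Prime → q ≤ b → b ^ m ≡ b [MOD q]) :
    ∀ j : ℕ, j ≤ p - 2 → AntiNiven b (b ^ m + 2 * j + 1) := by
  intro j hj
  have hb1 : 1 < b := by omega
  have hp2 : 2 ≤ p := hp.two_le
  have hp3 : 3 ≤ p := by
    rcases Nat.odd_iff.1 hodd with h; omega
  have hpb1 : p ≤ b - 1 := Nat.le_of_dvd (by omega) hpb
  set c : ℕ := 2 * j + 1 with hc
  have hcp : c ≤ 2 * p - 3 := by omega
  have hne : b ^ m + 2 * j + 1 = b ^ m + c := by omega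
  rw [hne]
  have hbm : 0 < b ^ m := Nat.pow_pos (by omega)
  have h2b : (2 : ℕ) ∣ b := heven.two_dvd
  have h2bm : (2 : ℕ) ∣ b ^ m := dvd_pow h2b hm.ne'
  constructor
  · omega
  · -- compute the digit sum
    have hc2b : c < 2 * b := by omega
    have hs : sdig b (b ^ m + c) = (if c < b then c + 1 else c - b + 2) := by
      by_cases hcase : c < b
      · rw [if_pos hcase]
        have hcbm : c < b ^ m := lt_of_lt_of_le hcase (Nat.le_self_pow hm.ne' b)
        rw [sdig_pow_add hb1 m hm c hcbm, sdig_split hb1 c,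
          Nat.mod_eq_of_lt hcase, Nat.div_eq_of_lt hcase]
        simp [sdig]
        omega
      · rw [if_neg hcase]
        push_neg at hcase
        rcases Nat.lt_or_ge m 2 with hm1 | hm2
        · have hm1 : m = 1 := by omega
          subst hm1
          rw [pow_one, sdig_split hb1 (b + c)]
          have h1 : (b + c) % b = c - b := by
            have : b + c = (c - b) + 2 * b := by omega
            rw [this]
            rw [two_mul, ← Nat.add_assoc, Nat.add_mod_right, Nat.add_mod_right,
              Nat.mod_eq_of_lt (by omega)]
          have h2 : (b + c) / b = 2 := by
            have : b + c = (c - b) + 2 * b := by omega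
            rw [this, Nat.add_mul_div_right _ _ (by omega), Nat.div_eq_of_lt (by omega)]
          rw [h1, h2, sdig_split hb1 2, Nat.mod_eq_of_lt (by omega),
            Nat.div_eq_of_lt (by omega)]
          simp [sdig]
        · have hcbm : c < b ^ m := by
            calc c < 2 * b := hc2b
            _ ≤ b * b := by nlinarith
            _ ≤ b ^ m := by
                rw [← pow_two]
                exact Nat.pow_le_pow_right (by omega) hm2
          rw [sdig_pow_add hb1 m hm c hcbm]
          have hcsplit : c = b ^ 1 + (c - b) := by rw [pow_one]; omega
          rw [hcsplit, sdig_pow_add hb1 1 one_pos (c - b) (by rw [pow_one]; omega),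
            sdig_split hb1 (c - b), Nat.mod_eq_of_lt (by omega), Nat.div_eq_of_lt (by omega)]
          simp [sdig]
          omega
    set n : ℕ := b ^ m + c with hn
    set s : ℕ := (if c < b then c + 1 else c - b + 2) with hsdef
    rw [hs]
    by_contra hgcd
    set q : ℕ := (Nat.gcd n s).minFac with hqdef
    have hq : q.Prime := Nat.minFac_prime hgcd
    have hqn : q ∣ n := (Nat.minFac_dvd _).trans (Nat.gcd_dvd_left n s)
    have hqs : q ∣ s := (Nat.minFac_dvd _).trans (Nat.gcd_dvd_right n s)
    -- n is odd
    have hnodd : n % 2 = 1 := by omega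
    have hq2 : q ≠ 2 := by
      intro h
      rw [h] at hqn
      omega
    have hqodd : Odd q := hq.odd_of_ne_two hq2
    -- q ≤ p - 1 (strictly less than p)
    have hqlt : q < p := by
      by_cases hcase : c < b
      · have hqs' : q ∣ 2 * (j + 1) := by
          have : s = 2 * (j + 1) := by rw [hsdef, if_pos hcase]; omega
          rwa [this] at hqs
        have hqj : q ∣ j + 1 := by
          rcases (Nat.Prime.dvd_mul hq).1 hqs' with h | h
          · exact absurd (Nat.prime_dvd_prime_iff_eq hq Nat.prime_two).1 (by simp [h, hq2])
          · exact h
        have := Nat.le_of_dvd (by omega) hqj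
        omega
      · have hsval : s = c - b + 2 := by rw [hsdef, if_neg hcase]
        push_neg at hcase
        have hspos : 0 < s := by omega
        have := Nat.le_of_dvd hspos hqs
        omega
    have hqb : q ≤ b := by omega
    -- q ∣ b + c
    have hmodq := hmod q hq hqb
    have hbc : b + c ≡ 0 [MOD q] :=
      ((hmodq.add_right c).symm).trans ((Nat.modEq_zero_iff_dvd).2 hqn)
    have hqbc : q ∣ b + c := (Nat.modEq_zero_iff_dvd).1 hbc
    -- q ∣ b - 1
    have hqb1 : q ∣ b - 1 := by
      by_cases hcase : c < b
      · have hsval : s = c + 1 := by rw [hsdef, if_pos hcase]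
        have := Nat.dvd_sub hqbc (hsval ▸ hqs)
        have e : b + c - (c + 1) = b - 1 := by omega
        rwa [e] at this
      · have hsval : s = c - b + 2 := by rw [hsdef, if_neg hcase]
        push_neg at hcase
        have h := Nat.dvd_sub hqbc (hsval ▸ hqs)
        have e : b + c - (c - b + 2) = 2 * (b - 1) := by omega
        rw [e] at h
        rcases (Nat.Prime.dvd_mul hq).1 h with h' | h'
        · exact absurd (Nat.prime_dvd_prime_iff_eq hq Nat.prime_two).1 (by simp [h', hq2])
        · exact h'
    have := hmin q hq hqodd hqb1
    omega
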